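/- arXiv:2306.15030 — 2 statements merged into one kernel-verified Lean document; each statement's English description precedes it below -/
import Mathlib

section
/- Let G be a compact topological group acting continuously by isometries on the Euclidean space X = ℝⁿ, let p ≥ 1, let c(x,y) = dist(x,y)^p, and let ν₁, ν₂ be G-invariant probability measures on X. If there exists an optimal coupling of ν₁ and ν₂ for the cost c, then there exists an optimal coupling of ν₁ and ν₂ for c that is invariant under the diagonal action of G on X × X. (Lemma 1.) -/
open MeasureTheory

/-- Averaging an invariant measure over a group via a product. -/
lemma aux_map_smul_prod {G Z : Type*} [MeasurableSpace G] [MeasurableSpace Z] [SMul G Z]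
    (μ : Measure G) [IsProbabilityMeasure μ] (ν : Measure Z) [IsProbabilityMeasure ν]
    (hf : Measurable fun q : G × Z => q.1 • q.2)
    (hν : ∀ g : G, ν.map (fun z => g • z) = ν) :
    (μ.prod ν).map (fun q : G × Z => q.1 • q.2) = ν := by
  ext s hs
  rw [Measure.map_apply hf hs, Measure.prod_apply (hf hs)]
  have h1 : ∀ g : G, ν (Prod.mk g ⁻¹' ((fun q : G × Z => q.1 • q.2) ⁻¹' s)) = ν s := by
    intro g
    have hg : Measurable fun z : Z => g • z := hf.comp (measurable_prodMk_left)
    conv_rhs => rw [← hν g]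
    rw [Measure.map_apply hg hs]
    rfl
  simp_rw [h1]
  simp

/-- **Lemma 1.** Let `G` be a compact topological group acting continuously by isometries on
the Euclidean space `X = ℝⁿ`, let `p ≥ 1`, let `c (x, y) = dist x y ^ p`, and let `ν₁, ν₂` be
`G`-invariant probability measures on `X`. If there exists an optimal coupling of `ν₁` and `ν₂`
for the cost `c`, then there exists an optimal coupling of `ν₁` and `ν₂` for `c` that is
invariant under the diagonal action of `G` on `X × X`. -/
theorem equivariant_ot_lemma1
    {n : ℕ} {G : Type*} [Group G] [TopologicalSpace G] [CompactSpace G] [IsTopologicalGroup G]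
    [MulAction G (EuclideanSpace ℝ (Fin n))]
    [ContinuousSMul G (EuclideanSpace ℝ (Fin n))]
    (hiso : ∀ (g : G) (x y : EuclideanSpace ℝ (Fin n)), dist (g • x) (g • y) = dist x y)
    (p : ℝ) (hp : 1 ≤ p)
    (c : EuclideanSpace ℝ (Fin n) × EuclideanSpace ℝ (Fin n) → ℝ)
    (hc : ∀ x y : EuclideanSpace ℝ (Fin n), c (x, y) = dist x y ^ p)
    (ν₁ ν₂ : Measure (EuclideanSpace ℝ (Fin n)))
    [IsProbabilityMeasure ν₁] [IsProbabilityMeasure ν₂]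
    (hν₁ : ∀ g : G, ν₁.map (fun x => g • x) = ν₁)
    (hν₂ : ∀ g : G, ν₂.map (fun x => g • x) = ν₂)
    (π : Measure (EuclideanSpace ℝ (Fin n) × EuclideanSpace ℝ (Fin n)))
    [IsProbabilityMeasure π]
    (hπ₁ : π.map Prod.fst = ν₁) (hπ₂ : π.map Prod.snd = ν₂)
    (hopt : ∀ π' : Measure (EuclideanSpace ℝ (Fin n) × EuclideanSpace ℝ (Fin n)),
      IsProbabilityMeasure π' → π'.map Prod.fst = ν₁ → π'.map Prod.snd = ν₂ →
      ∫ z, c z ∂π ≤ ∫ z, c z ∂π') :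
    ∃ πbar : Measure (EuclideanSpace ℝ (Fin n) × EuclideanSpace ℝ (Fin n)),
      IsProbabilityMeasure πbar ∧
      πbar.map Prod.fst = ν₁ ∧ πbar.map Prod.snd = ν₂ ∧
      (∀ π' : Measure (EuclideanSpace ℝ (Fin n) × EuclideanSpace ℝ (Fin n)),
        IsProbabilityMeasure π' → π'.map Prod.fst = ν₁ → π'.map Prod.snd = ν₂ →
        ∫ z, c z ∂πbar ≤ ∫ z, c z ∂π') ∧
      (∀ g : G, πbar.map (fun z : EuclideanSpace ℝ (Fin n) × EuclideanSpace ℝ (Fin n) =>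
        g • z) = πbar) := by
  classical
  borelize G
  haveI : Nonempty G := ⟨1⟩
  haveI h2smul : MeasurableSMul₂ G (EuclideanSpace ℝ (Fin n) × EuclideanSpace ℝ (Fin n)) :=
    ContinuousSMul.measurableSMul₂
  haveI h1smul : MeasurableSMul₂ G (EuclideanSpace ℝ (Fin n)) := ContinuousSMul.measurableSMul₂
  set μ : Measure G := Measure.haarMeasure ⊤ with hμdef
  haveI hμprob : IsProbabilityMeasure μ := ⟨by
    rw [← TopologicalSpace.PositiveCompacts.coe_top (α := G)]
    exact Measure.haarMeasure_self⟩
  set f : G × (EuclideanSpace ℝ (Fin n) × EuclideanSpace ℝ (Fin n)) →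
      EuclideanSpace ℝ (Fin n) × EuclideanSpace ℝ (Fin n) := fun q => q.1 • q.2 with hfdef
  have hf : Measurable f := measurable_smul
  have hfX : Measurable fun q : G × EuclideanSpace ℝ (Fin n) => q.1 • q.2 := measurable_smul
  set πbar : Measure (EuclideanSpace ℝ (Fin n) × EuclideanSpace ℝ (Fin n)) :=
    (μ.prod π).map f with hπbardef
  haveI hπbarprob : IsProbabilityMeasure πbar := Measure.isProbabilityMeasure_map hf.aemeasurable
  have hceq : c = fun z : EuclideanSpace ℝ (Fin n) × EuclideanSpace ℝ (Fin n) =>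
      dist z.1 z.2 ^ p := by
    funext z; obtain ⟨x, y⟩ := z; exact hc x y
  have hcm : Measurable c := by
    rw [hceq]
    exact ((Real.continuous_rpow_const (by linarith)).comp continuous_dist).measurable
  have hc0 : ∀ z, 0 ≤ c z := by
    intro z; rw [hceq]; exact Real.rpow_nonneg dist_nonneg p
  have hcinv : ∀ (g : G) (z : EuclideanSpace ℝ (Fin n) × EuclideanSpace ℝ (Fin n)),
      c (g • z) = c z := by
    intro g z
    obtain ⟨x, y⟩ := z
    have h : (g • ((x, y) : EuclideanSpace ℝ (Fin n) × EuclideanSpace ℝ (Fin n))) =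
        (g • x, g • y) := rfl
    rw [h, hc, hc, hiso]
  have hfst : πbar.map Prod.fst = ν₁ := by
    rw [hπbardef, Measure.map_map measurable_fst hf]
    have h1 : Prod.fst ∘ f = (fun q : G × EuclideanSpace ℝ (Fin n) => q.1 • q.2) ∘
        Prod.map id Prod.fst := rfl
    rw [h1, ← Measure.map_map hfX (measurable_id.prodMap measurable_fst),
      ← Measure.map_prod_map μ π measurable_id measurable_fst, Measure.map_id, hπ₁]
    exact aux_map_smul_prod μ ν₁ hfX hν₁
  have hsnd : πbar.map Prod.snd = ν₂ := by
    rw [hπbardef, Measure.map_map measurable_snd hf]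
    have h1 : Prod.snd ∘ f = (fun q : G × EuclideanSpace ℝ (Fin n) => q.1 • q.2) ∘
        Prod.map id Prod.snd := rfl
    rw [h1, ← Measure.map_map hfX (measurable_id.prodMap measurable_snd),
      ← Measure.map_prod_map μ π measurable_id measurable_snd, Measure.map_id, hπ₂]
    exact aux_map_smul_prod μ ν₂ hfX hν₂
  have key : ∫ z, c z ∂πbar = ∫ z, c z ∂π := by
    have hint : ∀ ρ : Measure (EuclideanSpace ℝ (Fin n) × EuclideanSpace ℝ (Fin n)),
        ∫ z, c z ∂ρ = (∫⁻ z, ENNReal.ofReal (c z) ∂ρ).toReal := fun ρ =>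
      integral_eq_lintegral_of_nonneg_ae (Filter.Eventually.of_forall hc0)
        hcm.aestronglyMeasurable
    rw [hint πbar, hint π]
    congr 1
    calc ∫⁻ z, ENNReal.ofReal (c z) ∂πbar
        = ∫⁻ q, ENNReal.ofReal (c (f q)) ∂(μ.prod π) :=
          lintegral_map hcm.ennreal_ofReal hf
      _ = ∫⁻ q, ENNReal.ofReal (c q.2) ∂(μ.prod π) := by
          apply lintegral_congr; intro q; exact congrArg _ (hcinv q.1 q.2)
      _ = ∫⁻ z, ENNReal.ofReal (c z) ∂((μ.prod π).map Prod.snd) :=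
          (lintegral_map hcm.ennreal_ofReal measurable_snd).symm
      _ = ∫⁻ z, ENNReal.ofReal (c z) ∂π := by
          rw [Measure.map_snd_prod, measure_univ, one_smul]
  refine ⟨πbar, hπbarprob, hfst, hsnd, ?_, ?_⟩
  · intro π' hπ' h1 h2
    rw [key]
    exact hopt π' hπ' h1 h2
  · intro g
    have h2 : (fun z : EuclideanSpace ℝ (Fin n) × EuclideanSpace ℝ (Fin n) => g • z) ∘ f =
        f ∘ Prod.map (fun h : G => g * h) id := by
      funext q
      show g • (q.1 • q.2) = (g * q.1) • q.2
      rw [mul_smul]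
    rw [hπbardef, Measure.map_map (measurable_const_smul g) hf, h2,
      ← Measure.map_map hf ((measurable_const_mul g).prodMap measurable_id),
      ← Measure.map_prod_map μ π (measurable_const_mul g) measurable_id,
      Measure.map_id, map_mul_left_eq_self]
end

section
/- Let G be a compact topological group acting continuously by isometries on the Euclidean space X = ℝⁿ, let p ≥ 1, let c(x,y) = dist(x,y)^p, and let ν₁, ν₂ be G-invariant probability measures on X. Suppose the coupling of ν₁, ν₂ induced by pushing forward ν₁ under x ↦ (x, T(x)) is the unique optimal coupling for cost c. Then this optimal coupling is invariant under the diagonal action of G on X × X, and the optimal transport map T is G-equivariant ν₁-almost everywhere, i.e. T(g•x) = g•T(x) for every g ∈ G and ν₁-almost every x. (Theorem 1, part 1.) -/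
open MeasureTheory

/-- **Theorem 1, part 1.** Let `G` be a compact topological group acting continuously by
isometries on the Euclidean space `X = ℝⁿ`, let `p ≥ 1`, let `c (x, y) = dist x y ^ p`, and
let `ν₁, ν₂` be `G`-invariant probability measures on `X`. Suppose the coupling of `ν₁, ν₂`
induced by pushing forward `ν₁` under `x ↦ (x, T x)` is the unique optimal coupling for the
cost `c`. Then this optimal coupling is invariant under the diagonal action of `G` on
`X × X`, and the optimal transport map `T` is `G`-equivariant `ν₁`-almost everywhere,
i.e. `T (g • x) = g • T x` for every `g ∈ G` and `ν₁`-almost every `x`. -/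
theorem equivariant_ot_theorem1_part1
    {n : ℕ} {G : Type*} [Group G] [TopologicalSpace G] [CompactSpace G] [IsTopologicalGroup G]
    [MulAction G (EuclideanSpace ℝ (Fin n))]
    [ContinuousSMul G (EuclideanSpace ℝ (Fin n))]
    (hiso : ∀ (g : G) (x y : EuclideanSpace ℝ (Fin n)), dist (g • x) (g • y) = dist x y)
    (p : ℝ) (hp : 1 ≤ p)
    (c : EuclideanSpace ℝ (Fin n) × EuclideanSpace ℝ (Fin n) → ℝ)
    (hc : ∀ x y : EuclideanSpace ℝ (Fin n), c (x, y) = dist x y ^ p)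
    (ν₁ ν₂ : Measure (EuclideanSpace ℝ (Fin n)))
    [IsProbabilityMeasure ν₁] [IsProbabilityMeasure ν₂]
    (hν₁ : ∀ g : G, ν₁.map (fun x => g • x) = ν₁)
    (hν₂ : ∀ g : G, ν₂.map (fun x => g • x) = ν₂)
    (T : EuclideanSpace ℝ (Fin n) → EuclideanSpace ℝ (Fin n))
    (hT : Measurable T)
    (π : Measure (EuclideanSpace ℝ (Fin n) × EuclideanSpace ℝ (Fin n)))
    (hπ : π = ν₁.map (fun x => (x, T x)))
    (hπ₁ : π.map Prod.fst = ν₁) (hπ₂ : π.map Prod.snd = ν₂)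
    (hopt : ∀ π' : Measure (EuclideanSpace ℝ (Fin n) × EuclideanSpace ℝ (Fin n)),
      IsProbabilityMeasure π' → π'.map Prod.fst = ν₁ → π'.map Prod.snd = ν₂ →
      ∫ z, c z ∂π ≤ ∫ z, c z ∂π')
    (huniq : ∀ π' : Measure (EuclideanSpace ℝ (Fin n) × EuclideanSpace ℝ (Fin n)),
      IsProbabilityMeasure π' → π'.map Prod.fst = ν₁ → π'.map Prod.snd = ν₂ →
      (∀ π'' : Measure (EuclideanSpace ℝ (Fin n) × EuclideanSpace ℝ (Fin n)),
        IsProbabilityMeasure π'' → π''.map Prod.fst = ν₁ → π''.map Prod.snd = ν₂ →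
        ∫ z, c z ∂π' ≤ ∫ z, c z ∂π'') →
      π' = π) :
    (∀ g : G, π.map (fun z : EuclideanSpace ℝ (Fin n) × EuclideanSpace ℝ (Fin n) =>
      g • z) = π) ∧
    (∀ g : G, ∀ᵐ x ∂ν₁, T (g • x) = g • T x) := by
  classical
  have hc' : c = fun z : EuclideanSpace ℝ (Fin n) × EuclideanSpace ℝ (Fin n) =>
      dist z.1 z.2 ^ p := funext fun ⟨x, y⟩ => hc x y
  subst hc'
  have hcmeas : Measurable (fun z : EuclideanSpace ℝ (Fin n) × EuclideanSpace ℝ (Fin n) =>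
      dist z.1 z.2 ^ p) :=
    by fun_prop
  have hTm : Measurable (fun x : EuclideanSpace ℝ (Fin n) => (x, T x)) :=
    measurable_id.prodMk hT
  have hprob : IsProbabilityMeasure π := by
    rw [hπ]; exact Measure.isProbabilityMeasure_map hTm.aemeasurable
  have hcontg : ∀ g : G, Continuous (fun x : EuclideanSpace ℝ (Fin n) => g • x) :=
    fun g => continuous_const.smul continuous_id
  have hcontg2 : ∀ g : G, Continuous
      (fun z : EuclideanSpace ℝ (Fin n) × EuclideanSpace ℝ (Fin n) => g • z) :=
    fun g => continuous_const_smul g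
  have hinv : ∀ g : G, π.map
      (fun z : EuclideanSpace ℝ (Fin n) × EuclideanSpace ℝ (Fin n) => g • z) = π := by
    intro g
    have hmg := (hcontg2 g).measurable
    have hmg1 := (hcontg g).measurable
    have h1 : (π.map (fun z : EuclideanSpace ℝ (Fin n) × EuclideanSpace ℝ (Fin n) =>
        g • z)).map Prod.fst = ν₁ := by
      rw [Measure.map_map measurable_fst hmg]
      have heq : (Prod.fst ∘ fun z : EuclideanSpace ℝ (Fin n) × EuclideanSpace ℝ (Fin n) =>
          g • z) = (fun x : EuclideanSpace ℝ (Fin n) => g • x) ∘ Prod.fst := rfl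
      rw [heq, ← Measure.map_map hmg1 measurable_fst, hπ₁, hν₁]
    have h2 : (π.map (fun z : EuclideanSpace ℝ (Fin n) × EuclideanSpace ℝ (Fin n) =>
        g • z)).map Prod.snd = ν₂ := by
      rw [Measure.map_map measurable_snd hmg]
      have heq : (Prod.snd ∘ fun z : EuclideanSpace ℝ (Fin n) × EuclideanSpace ℝ (Fin n) =>
          g • z) = (fun x : EuclideanSpace ℝ (Fin n) => g • x) ∘ Prod.snd := rfl
      rw [heq, ← Measure.map_map hmg1 measurable_snd, hπ₂, hν₂]
    have hcost : ∫ z, dist z.1 z.2 ^ p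
        ∂(π.map (fun z : EuclideanSpace ℝ (Fin n) × EuclideanSpace ℝ (Fin n) => g • z))
        = ∫ z, dist z.1 z.2 ^ p ∂π := by
      rw [integral_map hmg.aemeasurable hcmeas.aestronglyMeasurable]
      simp only [Prod.smul_fst, Prod.smul_snd, hiso]
    exact huniq _ (Measure.isProbabilityMeasure_map hmg.aemeasurable) h1 h2
      (fun π'' h h1' h2' => hcost ▸ hopt π'' h h1' h2')
  refine ⟨hinv, fun g => ?_⟩
  have hmg := (hcontg2 g).measurable
  have hmg1 := (hcontg g).measurable
  have hS : MeasurableSet {z : EuclideanSpace ℝ (Fin n) × EuclideanSpace ℝ (Fin n) |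
      z.2 = T z.1} :=
    measurableSet_eq_fun measurable_snd (hT.comp measurable_fst)
  have hf : Measurable (fun x : EuclideanSpace ℝ (Fin n) => (g • x, g • T x)) :=
    hmg1.prodMk (hmg1.comp hT)
  have hmap : ν₁.map (fun x : EuclideanSpace ℝ (Fin n) => (g • x, g • T x)) = π := by
    have heq : (fun x : EuclideanSpace ℝ (Fin n) => (g • x, g • T x))
        = (fun z : EuclideanSpace ℝ (Fin n) × EuclideanSpace ℝ (Fin n) => g • z)
          ∘ (fun x : EuclideanSpace ℝ (Fin n) => (x, T x)) := by
      funext x; simp [Prod.smul_mk]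
    rw [heq, ← Measure.map_map hmg hTm, ← hπ, hinv g]
  have hπS : π {z : EuclideanSpace ℝ (Fin n) × EuclideanSpace ℝ (Fin n) | z.2 = T z.1} = 1 := by
    rw [hπ, Measure.map_apply hTm hS]
    have heq : (fun x : EuclideanSpace ℝ (Fin n) => (x, T x)) ⁻¹'
        {z : EuclideanSpace ℝ (Fin n) × EuclideanSpace ℝ (Fin n) | z.2 = T z.1}
        = Set.univ := by
      ext x; simp
    rw [heq, measure_univ]
  have hν₁S : ν₁ {x : EuclideanSpace ℝ (Fin n) | g • T x = T (g • x)} = 1 := by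
    have hm := Measure.map_apply hf hS (μ := ν₁)
    rw [hmap, hπS] at hm
    exact hm.symm
  have hSm : MeasurableSet {x : EuclideanSpace ℝ (Fin n) | g • T x = T (g • x)} :=
    measurableSet_eq_fun (hmg1.comp hT) (hT.comp hmg1)
  rw [ae_iff]
  have hz := (prob_compl_eq_zero_iff (μ := ν₁) hSm).mpr hν₁S
  convert hz using 2
  ext x
  simp only [Set.mem_setOf_eq, Set.mem_compl_iff, not_iff_not]
  exact ⟨fun h => h.symm, fun h => h.symm⟩
end
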